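/- The Fisher information matrix of the family F₃ with density f(x,y;α₁,α₂)=α₁(α₁+α₂)e^{-(α₁+α₂)y} on 0<x<y, α₂(α₁+α₂)e^{-(α₁+α₂)x} on 0<y<x, is [[ (2α₁+α₂)/(α₁(α₁+α₂)²), 1/(α₁+α₂)² ], [ 1/(α₁+α₂)², (α₁+2α₂)/(α₂(α₁+α₂)²) ]]. -/

import Mathlib

open MeasureTheory Real

/-- Density of the Freund submanifold `F₃`, with parameters `p = (α₁, α₂)`. -/
noncomputable def freundF3 (p : Fin 2 → ℝ) (x y : ℝ) : ℝ :=
  if 0 < x ∧ x < y then p 0 * (p 0 + p 1) * Real.exp (-(p 0 + p 1) * y)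
  else if 0 < y ∧ y < x then p 1 * (p 0 + p 1) * Real.exp (-(p 0 + p 1) * x)
  else 0

/-- Partial derivative in the `i`-th parameter. -/
noncomputable def pd (i : Fin 2) (F : (Fin 2 → ℝ) → ℝ) (p : Fin 2 → ℝ) : ℝ :=
  deriv (fun t => F (Function.update p i t)) (p i)

/-- Fisher information `g_ij = −E[∂ᵢ∂ⱼ log f]`. -/
noncomputable def fisherF3 (p : Fin 2 → ℝ) (i j : Fin 2) : ℝ :=
  -∫ x in Set.Ioi (0:ℝ), ∫ y in Set.Ioi (0:ℝ),
      pd i (pd j (fun q => Real.log (freundF3 q x y))) p * freundF3 p x y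

open Set Filter Topology

section Aux

lemma upd_pos {p : Fin 2 → ℝ} (hp : ∀ i, 0 < p i) {j : Fin 2} {t : ℝ}
    (ht : 0 < t) (k : Fin 2) : 0 < Function.update p j t k := by
  rcases eq_or_ne k j with rfl | h
  · simpa using ht
  · rw [Function.update_of_ne h]; exact hp k

lemma pd_congr {F G : (Fin 2 → ℝ) → ℝ} {p : Fin 2 → ℝ} (hp : ∀ i, 0 < p i)
    (h : ∀ q : Fin 2 → ℝ, (∀ k, 0 < q k) → F q = G q) (j : Fin 2) :
    pd j F p = pd j G p := by
  unfold pd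
  apply Filter.EventuallyEq.deriv_eq
  filter_upwards [eventually_gt_nhds (hp j)] with t ht
  exact h _ (upd_pos hp ht)

variable {x y : ℝ}

lemma logA (hx : 0 < x) (hxy : x < y) (q : Fin 2 → ℝ) (h0 : 0 < q 0) (h1 : 0 < q 1) :
    Real.log (freundF3 q x y)
      = Real.log (q 0) + Real.log (q 0 + q 1) - (q 0 + q 1) * y := by
  have hs : 0 < q 0 + q 1 := by linarith
  rw [freundF3, if_pos ⟨hx, hxy⟩, Real.log_mul (by positivity) (Real.exp_ne_zero _),
    Real.log_mul h0.ne' hs.ne', Real.log_exp]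
  ring

lemma logB (hy : 0 < y) (hyx : y < x) (q : Fin 2 → ℝ) (h0 : 0 < q 0) (h1 : 0 < q 1) :
    Real.log (freundF3 q x y)
      = Real.log (q 1) + Real.log (q 0 + q 1) - (q 0 + q 1) * x := by
  have hs : 0 < q 0 + q 1 := by linarith
  rw [freundF3, if_neg (by rintro ⟨-, h⟩; linarith), if_pos ⟨hy, hyx⟩,
    Real.log_mul (by positivity) (Real.exp_ne_zero _),
    Real.log_mul h1.ne' hs.ne', Real.log_exp]
  ring

lemma pdA0 (hx : 0 < x) (hxy : x < y) (q : Fin 2 → ℝ) (hq : ∀ k, 0 < q k) :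
    pd 0 (fun r => Real.log (freundF3 r x y)) q = (q 0)⁻¹ + (q 0 + q 1)⁻¹ - y := by
  have h0 := hq 0; have h1 := hq 1
  have hs : q 0 + q 1 ≠ 0 := by positivity
  rw [pd_congr hq (fun r hr => logA hx hxy r (hr 0) (hr 1)) 0]
  unfold pd
  have hfun : (fun t => (fun r : Fin 2 → ℝ =>
        Real.log (r 0) + Real.log (r 0 + r 1) - (r 0 + r 1) * y) (Function.update q 0 t))
      = fun t => Real.log t + Real.log (t + q 1) - (t + q 1) * y := by
    funext t; simp [Function.update_apply]
  rw [hfun]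
  have ha : HasDerivAt (fun t : ℝ => t + q 1) 1 (q 0) := (hasDerivAt_id _).add_const _
  have hd := ((Real.hasDerivAt_log h0.ne').add (ha.log hs)).sub (ha.mul_const y)
  refine hd.deriv.trans ?_
  field_simp

lemma pdA1 (hx : 0 < x) (hxy : x < y) (q : Fin 2 → ℝ) (hq : ∀ k, 0 < q k) :
    pd 1 (fun r => Real.log (freundF3 r x y)) q = (q 0 + q 1)⁻¹ - y := by
  have h0 := hq 0; have h1 := hq 1
  have hs : q 0 + q 1 ≠ 0 := by positivity
  rw [pd_congr hq (fun r hr => logA hx hxy r (hr 0) (hr 1)) 1]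
  unfold pd
  have hfun : (fun t => (fun r : Fin 2 → ℝ =>
        Real.log (r 0) + Real.log (r 0 + r 1) - (r 0 + r 1) * y) (Function.update q 1 t))
      = fun t => Real.log (q 0) + Real.log (q 0 + t) - (q 0 + t) * y := by
    funext t; simp [Function.update_apply]
  rw [hfun]
  have ha : HasDerivAt (fun t : ℝ => q 0 + t) 1 (q 1) := (hasDerivAt_id _).const_add _
  have hd := ((hasDerivAt_const (q 1) (Real.log (q 0))).add (ha.log hs)).sub (ha.mul_const y)
  refine hd.deriv.trans ?_
  field_simp
  ring

lemma pdB0 (hy : 0 < y) (hyx : y < x) (q : Fin 2 → ℝ) (hq : ∀ k, 0 < q k) :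
    pd 0 (fun r => Real.log (freundF3 r x y)) q = (q 0 + q 1)⁻¹ - x := by
  have h0 := hq 0; have h1 := hq 1
  have hs : q 0 + q 1 ≠ 0 := by positivity
  rw [pd_congr hq (fun r hr => logB hy hyx r (hr 0) (hr 1)) 0]
  unfold pd
  have hfun : (fun t => (fun r : Fin 2 → ℝ =>
        Real.log (r 1) + Real.log (r 0 + r 1) - (r 0 + r 1) * x) (Function.update q 0 t))
      = fun t => Real.log (q 1) + Real.log (t + q 1) - (t + q 1) * x := by
    funext t; simp [Function.update_apply]
  rw [hfun]
  have ha : HasDerivAt (fun t : ℝ => t + q 1) 1 (q 0) := (hasDerivAt_id _).add_const _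
  have hd := ((hasDerivAt_const (q 0) (Real.log (q 1))).add (ha.log hs)).sub (ha.mul_const x)
  refine hd.deriv.trans ?_
  field_simp
  ring

lemma pdB1 (hy : 0 < y) (hyx : y < x) (q : Fin 2 → ℝ) (hq : ∀ k, 0 < q k) :
    pd 1 (fun r => Real.log (freundF3 r x y)) q = (q 1)⁻¹ + (q 0 + q 1)⁻¹ - x := by
  have h0 := hq 0; have h1 := hq 1
  have hs : q 0 + q 1 ≠ 0 := by positivity
  rw [pd_congr hq (fun r hr => logB hy hyx r (hr 0) (hr 1)) 1]
  unfold pd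
  have hfun : (fun t => (fun r : Fin 2 → ℝ =>
        Real.log (r 1) + Real.log (r 0 + r 1) - (r 0 + r 1) * x) (Function.update q 1 t))
      = fun t => Real.log t + Real.log (q 0 + t) - (q 0 + t) * x := by
    funext t; simp [Function.update_apply]
  rw [hfun]
  have ha : HasDerivAt (fun t : ℝ => q 0 + t) 1 (q 1) := (hasDerivAt_id _).const_add _
  have hd := ((Real.hasDerivAt_log h1.ne').add (ha.log hs)).sub (ha.mul_const x)
  refine hd.deriv.trans ?_
  field_simp

variable {p : Fin 2 → ℝ}

lemma pdpdA00 (hp : ∀ i, 0 < p i) (hx : 0 < x) (hxy : x < y) :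
    pd 0 (pd 0 (fun q => Real.log (freundF3 q x y))) p
      = -((p 0) ^ 2)⁻¹ - ((p 0 + p 1) ^ 2)⁻¹ := by
  have h0 := hp 0; have h1 := hp 1
  have hs : p 0 + p 1 ≠ 0 := by positivity
  rw [pd_congr hp (fun q hq => pdA0 hx hxy q hq) 0]
  unfold pd
  have hfun : (fun t => (fun r : Fin 2 → ℝ => (r 0)⁻¹ + (r 0 + r 1)⁻¹ - y)
        (Function.update p 0 t))
      = fun t => t⁻¹ + (t + p 1)⁻¹ - y := by
    funext t; simp [Function.update_apply]
  rw [hfun]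
  have ha : HasDerivAt (fun t : ℝ => t + p 1) 1 (p 0) := (hasDerivAt_id _).add_const _
  have hd := ((hasDerivAt_inv h0.ne').add (ha.inv hs)).sub_const y
  refine hd.deriv.trans ?_
  field_simp
  ring

lemma pdpdA01 (hp : ∀ i, 0 < p i) (hx : 0 < x) (hxy : x < y) :
    pd 0 (pd 1 (fun q => Real.log (freundF3 q x y))) p = -((p 0 + p 1) ^ 2)⁻¹ := by
  have h0 := hp 0; have h1 := hp 1
  have hs : p 0 + p 1 ≠ 0 := by positivity
  rw [pd_congr hp (fun q hq => pdA1 hx hxy q hq) 0]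
  unfold pd
  have hfun : (fun t => (fun r : Fin 2 → ℝ => (r 0 + r 1)⁻¹ - y) (Function.update p 0 t))
      = fun t => (t + p 1)⁻¹ - y := by
    funext t; simp [Function.update_apply]
  rw [hfun]
  have ha : HasDerivAt (fun t : ℝ => t + p 1) 1 (p 0) := (hasDerivAt_id _).add_const _
  have hd := (ha.inv hs).sub_const y
  refine hd.deriv.trans ?_
  field_simp

lemma pdpdA10 (hp : ∀ i, 0 < p i) (hx : 0 < x) (hxy : x < y) :
    pd 1 (pd 0 (fun q => Real.log (freundF3 q x y))) p = -((p 0 + p 1) ^ 2)⁻¹ := by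
  have h0 := hp 0; have h1 := hp 1
  have hs : p 0 + p 1 ≠ 0 := by positivity
  rw [pd_congr hp (fun q hq => pdA0 hx hxy q hq) 1]
  unfold pd
  have hfun : (fun t => (fun r : Fin 2 → ℝ => (r 0)⁻¹ + (r 0 + r 1)⁻¹ - y)
        (Function.update p 1 t))
      = fun t => (p 0)⁻¹ + (p 0 + t)⁻¹ - y := by
    funext t; simp [Function.update_apply]
  rw [hfun]
  have ha : HasDerivAt (fun t : ℝ => p 0 + t) 1 (p 1) := (hasDerivAt_id _).const_add _
  have hd := ((hasDerivAt_const (p 1) ((p 0)⁻¹)).add (ha.inv hs)).sub_const y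
  refine hd.deriv.trans ?_
  field_simp
  ring

lemma pdpdA11 (hp : ∀ i, 0 < p i) (hx : 0 < x) (hxy : x < y) :
    pd 1 (pd 1 (fun q => Real.log (freundF3 q x y))) p = -((p 0 + p 1) ^ 2)⁻¹ := by
  have h0 := hp 0; have h1 := hp 1
  have hs : p 0 + p 1 ≠ 0 := by positivity
  rw [pd_congr hp (fun q hq => pdA1 hx hxy q hq) 1]
  unfold pd
  have hfun : (fun t => (fun r : Fin 2 → ℝ => (r 0 + r 1)⁻¹ - y) (Function.update p 1 t))
      = fun t => (p 0 + t)⁻¹ - y := by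
    funext t; simp [Function.update_apply]
  rw [hfun]
  have ha : HasDerivAt (fun t : ℝ => p 0 + t) 1 (p 1) := (hasDerivAt_id _).const_add _
  have hd := (ha.inv hs).sub_const y
  refine hd.deriv.trans ?_
  field_simp

lemma pdpdB00 (hp : ∀ i, 0 < p i) (hy : 0 < y) (hyx : y < x) :
    pd 0 (pd 0 (fun q => Real.log (freundF3 q x y))) p = -((p 0 + p 1) ^ 2)⁻¹ := by
  have h0 := hp 0; have h1 := hp 1
  have hs : p 0 + p 1 ≠ 0 := by positivity
  rw [pd_congr hp (fun q hq => pdB0 hy hyx q hq) 0]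
  unfold pd
  have hfun : (fun t => (fun r : Fin 2 → ℝ => (r 0 + r 1)⁻¹ - x) (Function.update p 0 t))
      = fun t => (t + p 1)⁻¹ - x := by
    funext t; simp [Function.update_apply]
  rw [hfun]
  have ha : HasDerivAt (fun t : ℝ => t + p 1) 1 (p 0) := (hasDerivAt_id _).add_const _
  have hd := (ha.inv hs).sub_const x
  refine hd.deriv.trans ?_
  field_simp

lemma pdpdB01 (hp : ∀ i, 0 < p i) (hy : 0 < y) (hyx : y < x) :
    pd 0 (pd 1 (fun q => Real.log (freundF3 q x y))) p = -((p 0 + p 1) ^ 2)⁻¹ := by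
  have h0 := hp 0; have h1 := hp 1
  have hs : p 0 + p 1 ≠ 0 := by positivity
  rw [pd_congr hp (fun q hq => pdB1 hy hyx q hq) 0]
  unfold pd
  have hfun : (fun t => (fun r : Fin 2 → ℝ => (r 1)⁻¹ + (r 0 + r 1)⁻¹ - x)
        (Function.update p 0 t))
      = fun t => (p 1)⁻¹ + (t + p 1)⁻¹ - x := by
    funext t; simp [Function.update_apply]
  rw [hfun]
  have ha : HasDerivAt (fun t : ℝ => t + p 1) 1 (p 0) := (hasDerivAt_id _).add_const _
  have hd := ((hasDerivAt_const (p 0) ((p 1)⁻¹)).add (ha.inv hs)).sub_const x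
  refine hd.deriv.trans ?_
  field_simp
  ring

lemma pdpdB10 (hp : ∀ i, 0 < p i) (hy : 0 < y) (hyx : y < x) :
    pd 1 (pd 0 (fun q => Real.log (freundF3 q x y))) p = -((p 0 + p 1) ^ 2)⁻¹ := by
  have h0 := hp 0; have h1 := hp 1
  have hs : p 0 + p 1 ≠ 0 := by positivity
  rw [pd_congr hp (fun q hq => pdB0 hy hyx q hq) 1]
  unfold pd
  have hfun : (fun t => (fun r : Fin 2 → ℝ => (r 0 + r 1)⁻¹ - x) (Function.update p 1 t))
      = fun t => (p 0 + t)⁻¹ - x := by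
    funext t; simp [Function.update_apply]
  rw [hfun]
  have ha : HasDerivAt (fun t : ℝ => p 0 + t) 1 (p 1) := (hasDerivAt_id _).const_add _
  have hd := (ha.inv hs).sub_const x
  refine hd.deriv.trans ?_
  field_simp

lemma pdpdB11 (hp : ∀ i, 0 < p i) (hy : 0 < y) (hyx : y < x) :
    pd 1 (pd 1 (fun q => Real.log (freundF3 q x y))) p
      = -((p 1) ^ 2)⁻¹ - ((p 0 + p 1) ^ 2)⁻¹ := by
  have h0 := hp 0; have h1 := hp 1
  have hs : p 0 + p 1 ≠ 0 := by positivity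
  rw [pd_congr hp (fun q hq => pdB1 hy hyx q hq) 1]
  unfold pd
  have hfun : (fun t => (fun r : Fin 2 → ℝ => (r 1)⁻¹ + (r 0 + r 1)⁻¹ - x)
        (Function.update p 1 t))
      = fun t => t⁻¹ + (p 0 + t)⁻¹ - x := by
    funext t; simp [Function.update_apply]
  rw [hfun]
  have ha : HasDerivAt (fun t : ℝ => p 0 + t) 1 (p 1) := (hasDerivAt_id _).const_add _
  have hd := ((hasDerivAt_inv h1.ne').add (ha.inv hs)).sub_const x
  refine hd.deriv.trans ?_
  field_simp
  ring

/-! ### Integral lemmas -/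

lemma integral_exp_Ioi {s : ℝ} (hs : 0 < s) (a : ℝ) :
    ∫ u in Ioi a, Real.exp (-s * u) = Real.exp (-s * a) / s := by
  have hd : ∀ t ∈ Ici a, HasDerivAt (fun u : ℝ => -(Real.exp (-s * u) / s))
      (Real.exp (-s * t)) t := by
    intro t _
    have h1 : HasDerivAt (fun u : ℝ => -s * u) (-s) t := by
      simpa using (hasDerivAt_id t).const_mul (-s)
    have h2 := ((h1.exp).div_const s).neg
    refine h2.congr_deriv ?_
    field_simp
  have ht : Tendsto (fun u : ℝ => -(Real.exp (-s * u) / s)) atTop (𝓝 0) := by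
    have h1 : Tendsto (fun u : ℝ => s * u) atTop atTop := tendsto_id.const_mul_atTop hs
    have h2 := ((tendsto_exp_neg_atTop_nhds_zero.comp h1).div_const s).neg
    rw [show -((0:ℝ)/s) = 0 by simp] at h2
    exact h2.congr fun u => by simp [Function.comp, neg_mul]
  have := integral_Ioi_of_hasDerivAt_of_nonneg' hd (fun t _ => (Real.exp_pos _).le) ht
  rw [this]
  ring

lemma integrableOn_exp_Ioi {s : ℝ} (hs : 0 < s) (a : ℝ) :
    IntegrableOn (fun u : ℝ => Real.exp (-s * u)) (Ioi a) :=
  exp_neg_integrableOn_Ioi a hs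

lemma hasDerivAt_aux2 {s : ℝ} (hs : 0 < s) (t : ℝ) :
    HasDerivAt (fun u : ℝ => -((u / s + 1 / s ^ 2) * Real.exp (-s * u)))
      (t * Real.exp (-s * t)) t := by
  have h1 : HasDerivAt (fun u : ℝ => -s * u) (-s) t := by
    simpa using (hasDerivAt_id t).const_mul (-s)
  have hl : HasDerivAt (fun u : ℝ => u / s + 1 / s ^ 2) (1 / s) t :=
    ((hasDerivAt_id t).div_const s).add_const _
  have hd := (hl.mul h1.exp).neg
  refine hd.congr_deriv ?_
  field_simp
  ring

lemma tendsto_aux2 {s : ℝ} (hs : 0 < s) :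
    Tendsto (fun u : ℝ => -((u / s + 1 / s ^ 2) * Real.exp (-s * u))) atTop (𝓝 0) := by
  have h1 : Tendsto (fun u : ℝ => s * u) atTop atTop := tendsto_id.const_mul_atTop hs
  have h2 : Tendsto (fun u : ℝ => u * Real.exp (-s * u)) atTop (𝓝 0) := by
    have h3 := ((tendsto_pow_mul_exp_neg_atTop_nhds_zero 1).comp h1).const_mul (1 / s)
    rw [mul_zero] at h3
    refine h3.congr fun u => ?_
    simp only [Function.comp_apply, pow_one, neg_mul]
    field_simp
  have h4 : Tendsto (fun u : ℝ => Real.exp (-s * u)) atTop (𝓝 0) :=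
    (tendsto_exp_neg_atTop_nhds_zero.comp h1).congr fun u => by
      simp [Function.comp, neg_mul]
  have h5 := ((h2.const_mul (1 / s)).add (h4.const_mul (1 / s ^ 2))).neg
  simp only [mul_zero, add_zero, neg_zero] at h5
  refine h5.congr fun u => ?_
  ring

lemma integral_mul_exp_Ioi {s : ℝ} (hs : 0 < s) :
    ∫ u in Ioi (0:ℝ), u * Real.exp (-s * u) = 1 / s ^ 2 := by
  have := integral_Ioi_of_hasDerivAt_of_nonneg'
    (fun t _ => hasDerivAt_aux2 hs t)
    (fun t ht => mul_nonneg (le_of_lt ht) (Real.exp_pos _).le) (tendsto_aux2 hs)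
  rw [this]
  norm_num

lemma integrableOn_mul_exp_Ioi {s : ℝ} (hs : 0 < s) :
    IntegrableOn (fun u : ℝ => u * Real.exp (-s * u)) (Ioi (0:ℝ)) :=
  integrableOn_Ioi_deriv_of_nonneg' (fun t _ => hasDerivAt_aux2 hs t)
    (fun t ht => mul_nonneg (le_of_lt ht) (Real.exp_pos _).le) (tendsto_aux2 hs)

/-! ### The key double-integral computation -/

lemma key (p : Fin 2 → ℝ) (hp : ∀ i, 0 < p i) (G : ℝ → ℝ → ℝ) (cA cB : ℝ)
    (hGA : ∀ x y : ℝ, 0 < x → x < y → G x y = cA)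
    (hGB : ∀ x y : ℝ, 0 < y → y < x → G x y = cB) :
    (∫ x in Ioi (0:ℝ), ∫ y in Ioi (0:ℝ), G x y * freundF3 p x y)
      = cA * (p 0 / (p 0 + p 1)) + cB * (p 1 / (p 0 + p 1)) := by
  have h0 := hp 0; have h1 := hp 1
  have hs : 0 < p 0 + p 1 := by linarith
  set s : ℝ := p 0 + p 1 with hsdef
  have hinner : ∀ x : ℝ, 0 < x →
      (∫ y in Ioi (0:ℝ), G x y * freundF3 p x y)
        = (cA * p 0) * Real.exp (-s * x) + (cB * p 1 * s) * (x * Real.exp (-s * x)) := by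
    intro x hx
    have e1 : EqOn (fun y => G x y * freundF3 p x y)
        (fun _ => cB * (p 1 * s * Real.exp (-s * x))) (Ioo 0 x) := by
      intro y hy
      simp only
      rw [hGB x y hy.1 hy.2, freundF3, if_neg (by rintro ⟨-, h⟩; exact absurd hy.2 (asymm h)),
        if_pos ⟨hy.1, hy.2⟩]
    have e2 : EqOn (fun y => G x y * freundF3 p x y)
        (fun y => (cA * (p 0 * s)) * Real.exp (-s * y)) (Ioi x) := by
      intro y hy
      simp only
      rw [hGA x y hx hy, freundF3, if_pos ⟨hx, hy⟩]
      ring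
    have int1 : IntegrableOn (fun y => G x y * freundF3 p x y) (Ioo 0 x) :=
      MeasureTheory.IntegrableOn.congr_fun
        (integrableOn_const measure_Ioo_lt_top.ne) e1.symm measurableSet_Ioo
    have int2 : IntegrableOn (fun y => G x y * freundF3 p x y) (Ioi x) :=
      MeasureTheory.IntegrableOn.congr_fun
        ((integrableOn_exp_Ioi hs x).const_mul _) e2.symm measurableSet_Ioi
    have int2' : IntegrableOn (fun y => G x y * freundF3 p x y) (Ici x) := by
      rwa [integrableOn_Ici_iff_integrableOn_Ioi]
    have hdisj : Disjoint (Ioo (0:ℝ) x) (Ici x) :=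
      Set.disjoint_left.mpr fun y hy hy' => absurd hy.2 (not_lt.2 hy')
    rw [← Ioo_union_Ici_eq_Ioi hx,
      setIntegral_union hdisj measurableSet_Ici int1 int2',
      integral_Ici_eq_integral_Ioi,
      setIntegral_congr_fun measurableSet_Ioo e1,
      setIntegral_congr_fun measurableSet_Ioi e2,
      setIntegral_const, integral_const_mul, integral_exp_Ioi hs x,
      Real.volume_real_Ioo_of_le hx.le]
    rw [smul_eq_mul]
    field_simp
    ring
  rw [setIntegral_congr_fun measurableSet_Ioi (fun x hx => hinner x hx)]
  rw [integral_add ((integrableOn_exp_Ioi hs 0).const_mul _)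
      ((integrableOn_mul_exp_Ioi hs).const_mul _),
    integral_const_mul, integral_const_mul, integral_exp_Ioi hs 0, integral_mul_exp_Ioi hs, mul_zero, Real.exp_zero]
  have hsne : s ≠ 0 := hs.ne'
  field_simp

end Aux

theorem freundF3_fisher_matrix (p : Fin 2 → ℝ) (hp : ∀ i, 0 < p i) :
    ∀ i j : Fin 2, fisherF3 p i j =
      !![(2 * p 0 + p 1) / (p 0 * (p 0 + p 1) ^ 2), 1 / (p 0 + p 1) ^ 2;
         1 / (p 0 + p 1) ^ 2, (p 0 + 2 * p 1) / (p 1 * (p 0 + p 1) ^ 2)] i j := by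
  have h0 := hp 0; have h1 := hp 1
  have hs : 0 < p 0 + p 1 := by linarith
  intro i j
  fin_cases i <;> fin_cases j
  · show fisherF3 p 0 0 = (2 * p 0 + p 1) / (p 0 * (p 0 + p 1) ^ 2)
    rw [fisherF3, key p hp _ (-((p 0) ^ 2)⁻¹ - ((p 0 + p 1) ^ 2)⁻¹) (-((p 0 + p 1) ^ 2)⁻¹)
      (fun x y hx hxy => pdpdA00 hp hx hxy) (fun x y hy hyx => pdpdB00 hp hy hyx)]
    field_simp
    ring
  · show fisherF3 p 0 1 = 1 / (p 0 + p 1) ^ 2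
    rw [fisherF3, key p hp _ (-((p 0 + p 1) ^ 2)⁻¹) (-((p 0 + p 1) ^ 2)⁻¹)
      (fun x y hx hxy => pdpdA01 hp hx hxy) (fun x y hy hyx => pdpdB01 hp hy hyx)]
    field_simp
    ring
  · show fisherF3 p 1 0 = 1 / (p 0 + p 1) ^ 2
    rw [fisherF3, key p hp _ (-((p 0 + p 1) ^ 2)⁻¹) (-((p 0 + p 1) ^ 2)⁻¹)
      (fun x y hx hxy => pdpdA10 hp hx hxy) (fun x y hy hyx => pdpdB10 hp hy hyx)]
    field_simp
    ring
  · show fisherF3 p 1 1 = (p 0 + 2 * p 1) / (p 1 * (p 0 + p 1) ^ 2)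
    rw [fisherF3, key p hp _ (-((p 0 + p 1) ^ 2)⁻¹) (-((p 1) ^ 2)⁻¹ - ((p 0 + p 1) ^ 2)⁻¹)
      (fun x y hx hxy => pdpdA11 hp hx hxy) (fun x y hy hyx => pdpdB11 hp hy hyx)]
    field_simp
    ring
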